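/- Let R be Noetherian and let h_1,...,h_s generate 𝓜 = ker[yE-A,-B] ∩ (M[y] × R[y]^m) as an R[y]-module. Then the R-submodule generated by all coefficient vectors of π(h_1),...,π(h_s) equals the maximal reachability submodule M*_0 of M. -/

import Mathlib

open Matrix

variable {R : Type*} [CommRing R] {n m : ℕ}

/-- `U` is `(A,B)`-invariant: `A·U ⊆ U + im B`. -/
def ABInvariant (A : Matrix (Fin n) (Fin n) R) (B : Matrix (Fin n) (Fin m) R)
    (U : Submodule R (Fin n → R)) : Prop :=
  ∀ x ∈ U, A.mulVec x ∈ U ⊔ LinearMap.range B.mulVecLin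

/-- `x` is reached from `0` at time `r` by a trajectory staying in `U`. -/
def ABReached (A : Matrix (Fin n) (Fin n) R) (B : Matrix (Fin n) (Fin m) R)
    (U : Submodule R (Fin n → R)) (x : Fin n → R) (r : ℕ) : Prop :=
  ∃ (u : ℕ → Fin m → R) (xs : ℕ → Fin n → R),
    xs 0 = 0 ∧ (∀ k, xs (k + 1) = A.mulVec (xs k) + B.mulVec (u k)) ∧
    (∀ k, 1 ≤ k → k ≤ r → xs k ∈ U) ∧ xs r = x

/-- `U` is a reachability submodule. -/
def ABReachability (A : Matrix (Fin n) (Fin n) R) (B : Matrix (Fin n) (Fin m) R)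
    (U : Submodule R (Fin n → R)) : Prop :=
  ABInvariant A B U ∧ ∀ x ∈ U, ∃ r, ABReached A B U x r

open Polynomial

/-- The `k`-th coefficient vector of a polynomial vector. -/
def coeffVec (f : Fin n → R[X]) (k : ℕ) : Fin n → R := fun i => (f i).coeff k

/-- The `R`-submodule generated by the coefficient vectors of `f`. -/
def Uf (f : Fin n → R[X]) : Submodule R (Fin n → R) :=
  Submodule.span R (Set.range (coeffVec f))

/-- The kernel condition `(yE - A) f = B g`. -/
def kerCond (A : Matrix (Fin n) (Fin n) R) (B : Matrix (Fin n) (Fin m) R)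
    (f : Fin n → R[X]) (g : Fin m → R[X]) : Prop :=
  ((X : R[X]) • (1 : Matrix (Fin n) (Fin n) R[X]) - A.map C).mulVec f = (B.map C).mulVec g

/-- The module `𝓜 = ker[yE-A,-B] ∩ (M[y] × R[y]^m)`. -/
def scrM (A : Matrix (Fin n) (Fin n) R) (B : Matrix (Fin n) (Fin m) R)
    (M : Submodule R (Fin n → R)) : Set ((Fin n → R[X]) × (Fin m → R[X])) :=
  {p | kerCond A B p.1 p.2 ∧ ∀ k, coeffVec p.1 k ∈ M}

/-! ### Auxiliary lemmas -/

lemma coeffVec_def (f : Fin n → R[X]) (k : ℕ) : (fun i => (f i).coeff k) = coeffVec f k := rfl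

lemma coeff_mapC_mulVec {ι κ : Type*} [Fintype κ] (A : Matrix ι κ R) (f : κ → R[X])
    (k : ℕ) (i : ι) :
    ((A.map C).mulVec f i).coeff k = A.mulVec (fun j => (f j).coeff k) i := by
  simp [Matrix.mulVec, dotProduct, finset_sum_coeff, coeff_C_mul]

/-- Coefficientwise form of the kernel condition. -/
lemma kerCond_iff (A : Matrix (Fin n) (Fin n) R) (B : Matrix (Fin n) (Fin m) R)
    (f : Fin n → R[X]) (g : Fin m → R[X]) :
    kerCond A B f g ↔
      (A.mulVec (coeffVec f 0) + B.mulVec (coeffVec g 0) = 0 ∧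
       ∀ k, coeffVec f k = A.mulVec (coeffVec f (k+1)) + B.mulVec (coeffVec g (k+1))) := by
  have hL : ∀ i k, ((((X : R[X]) • (1 : Matrix (Fin n) (Fin n) R[X]) - A.map C).mulVec f) i).coeff k
      = (X * f i).coeff k - A.mulVec (coeffVec f k) i := by
    intro i k
    rw [Matrix.sub_mulVec, Matrix.smul_mulVec, Matrix.one_mulVec]
    simp only [Pi.sub_apply, Pi.smul_apply, smul_eq_mul, coeff_sub]
    rw [coeff_mapC_mulVec]
    rfl
  constructor
  · intro hk
    have h' : ∀ i k, (X * f i).coeff k =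
        A.mulVec (coeffVec f k) i + B.mulVec (coeffVec g k) i := by
      intro i k
      have h1 := congrArg (fun p => p.coeff k) (congrFun hk i)
      rw [hL i k, coeff_mapC_mulVec, coeffVec_def] at h1
      exact sub_eq_iff_eq_add'.mp h1
    constructor
    · funext i
      have := h' i 0
      rw [mul_coeff_zero, coeff_X_zero, zero_mul] at this
      simpa [Pi.add_apply] using this.symm
    · intro k
      funext i
      have := h' i (k+1)
      rw [coeff_X_mul] at this
      simpa [coeffVec, Pi.add_apply] using this
  · rintro ⟨h0, hrec⟩
    funext i
    ext k
    rw [hL i k, coeff_mapC_mulVec, coeffVec_def]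
    cases k with
    | zero =>
        rw [mul_coeff_zero, coeff_X_zero, zero_mul]
        have h1 := congrFun h0 i
        simp only [Pi.add_apply, Pi.zero_apply] at h1
        have h2 : A.mulVec (coeffVec f 0) i = - B.mulVec (coeffVec g 0) i :=
          eq_neg_of_add_eq_zero_left h1
        rw [h2]; ring
    | succ k =>
        rw [coeff_X_mul]
        have := congrFun (hrec k) i
        simp only [Pi.add_apply] at this
        have hf : (f i).coeff k = coeffVec f k i := rfl
        rw [hf, this]; ring

/-- The states reached at time `r` inside `U` form a submodule. -/
def reachedSub (A : Matrix (Fin n) (Fin n) R) (B : Matrix (Fin n) (Fin m) R)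
    (U : Submodule R (Fin n → R)) (r : ℕ) : Submodule R (Fin n → R) where
  carrier := {x | ABReached A B U x r}
  zero_mem' := by
    refine ⟨0, 0, rfl, ?_, ?_, rfl⟩
    · intro k; simp [Matrix.mulVec_zero]
    · intro k _ _; simp
  add_mem' := by
    rintro x y ⟨u, xs, h0, hrec, hmem, hr⟩ ⟨v, ys, g0, grec, gmem, gr⟩
    refine ⟨u + v, xs + ys, by simp [h0, g0], ?_, ?_, by simp [hr, gr]⟩
    · intro k
      simp only [Pi.add_apply, hrec k, grec k, Matrix.mulVec_add]
      abel
    · intro k h1 h2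
      exact U.add_mem (hmem k h1 h2) (gmem k h1 h2)
  smul_mem' := by
    rintro c x ⟨u, xs, h0, hrec, hmem, hr⟩
    refine ⟨c • u, c • xs, by simp [h0], ?_, ?_, by simp [hr]⟩
    · intro k
      simp only [Pi.smul_apply, hrec k, Matrix.mulVec_smul, smul_add]
    · intro k h1 h2
      exact U.smul_mem c (hmem k h1 h2)

lemma ABReached.pad {A : Matrix (Fin n) (Fin n) R} {B : Matrix (Fin n) (Fin m) R}
    {U : Submodule R (Fin n → R)} {x : Fin n → R} {r : ℕ}
    (h : ABReached A B U x r) (t : ℕ) : ABReached A B U x (r + t) := by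
  obtain ⟨u, xs, h0, hrec, hmem, hr⟩ := h
  refine ⟨fun k => if k < t then 0 else u (k - t), fun k => if k < t then 0 else xs (k - t),
    ?_, ?_, ?_, ?_⟩
  · by_cases ht : 0 < t <;> simp [ht, h0]
  · intro k
    by_cases hk : k < t
    · have hk1 : k + 1 - t = 0 := by omega
      by_cases hk2 : k + 1 < t <;>
        simp [hk, hk2, hk1, h0, Matrix.mulVec_zero]
    · have hk2 : ¬ (k + 1 < t) := by omega
      have hk3 : k + 1 - t = (k - t) + 1 := by omega
      simp only [hk, hk2, if_false, hk3, hrec (k - t)]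
  · intro k h1 h2
    by_cases hk : k < t
    · simp only [hk, if_true]; exact U.zero_mem
    · simp only [hk, if_false]
      rcases Nat.eq_zero_or_pos (k - t) with h' | h'
      · rw [h', h0]; exact U.zero_mem
      · exact hmem _ h' (by omega)
  · have : ¬ (r + t < t) := by omega
    simp only [this, if_false, Nat.add_sub_cancel, hr]

lemma reachedSub_mono (A : Matrix (Fin n) (Fin n) R) (B : Matrix (Fin n) (Fin m) R)
    (U : Submodule R (Fin n → R)) : Monotone (reachedSub A B U) := by
  intro a b hab x hx
  have := ABReached.pad (A := A) (B := B) (U := U) hx (b - a)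
  have hba : a + (b - a) = b := by omega
  rwa [hba] at this

/-- Polynomial vector with coefficients `z T, z (T-1), ..., z 0`. -/
noncomputable def polyOf {ι : Type*} (z : ℕ → ι → R) (T : ℕ) : ι → R[X] :=
  fun i => ∑ k ∈ Finset.range (T+1), C (z (T-k) i) * X^k

lemma coeffVec_polyOf {N : ℕ} (z : ℕ → Fin N → R) (T k : ℕ) :
    coeffVec (polyOf z T) k = if k ≤ T then z (T-k) else 0 := by
  funext i
  simp only [coeffVec, polyOf, finset_sum_coeff, coeff_C_mul, coeff_X_pow,
    mul_ite, mul_one, mul_zero]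
  rw [Finset.sum_ite_eq (Finset.range (T+1)) k (fun j => z (T-j) i)]
  by_cases hk : k ≤ T
  · simp [Finset.mem_range, Nat.lt_succ_iff, hk]
  · simp [Finset.mem_range, Nat.lt_succ_iff, hk]

/-- A loop trajectory (from `0` back to `0`) staying in `M` gives an element of `scrM`. -/
lemma mem_scrM_of_loop (A : Matrix (Fin n) (Fin n) R) (B : Matrix (Fin n) (Fin m) R)
    (M : Submodule R (Fin n → R)) (z : ℕ → Fin n → R) (w : ℕ → Fin m → R) (T : ℕ)
    (hz0 : z 0 = 0) (hstep : ∀ j, z (j+1) = A.mulVec (z j) + B.mulVec (w j))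
    (hT : z (T+1) = 0) (hM : ∀ j, j ≤ T → z j ∈ M) :
    (polyOf z T, polyOf w T) ∈ scrM A B M := by
  constructor
  · rw [kerCond_iff]
    constructor
    · rw [show coeffVec (polyOf z T) 0 = z T by rw [coeffVec_polyOf]; simp,
          show (coeffVec (polyOf w T) 0 : Fin m → R) = w T by rw [coeffVec_polyOf]; simp]
      rw [← hstep T, hT]
    · intro k
      rw [coeffVec_polyOf, coeffVec_polyOf, coeffVec_polyOf]
      by_cases hk1 : k + 1 ≤ T
      · have hk : k ≤ T := by omega
        have harith : T - (k+1) + 1 = T - k := by omega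
        simp only [hk, hk1, if_true]
        rw [← harith, ← hstep (T - (k+1))]
      · by_cases hk : k ≤ T
        · have hkT : k = T := by omega
          rw [if_pos hk, if_neg hk1, if_neg hk1, hkT, Nat.sub_self, hz0]
          simp [Matrix.mulVec_zero]
        · simp [hk, hk1, Matrix.mulVec_zero]
  · intro k
    simp only
    rw [coeffVec_polyOf]
    by_cases hk : k ≤ T
    · simp only [hk, if_true]; exact hM _ (by omega)
    · simp only [hk, if_false]; exact M.zero_mem

/-- From an element of the kernel with coefficients in `U`, every coefficient vector is
reached inside `U`. -/
lemma reached_coeffVec (A : Matrix (Fin n) (Fin n) R) (B : Matrix (Fin n) (Fin m) R)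
    (f : Fin n → R[X]) (g : Fin m → R[X]) (hker : kerCond A B f g)
    (U : Submodule R (Fin n → R)) (hU : ∀ k, coeffVec f k ∈ U)
    (d : ℕ) (hd : ∀ k, d < k → coeffVec f k = 0) (k : ℕ) (hk : k ≤ d + 1) :
    ABReached A B U (coeffVec f k) (d + 1 - k) := by
  rw [kerCond_iff] at hker
  obtain ⟨h0, hrec⟩ := hker
  refine ⟨fun j => if j ≤ d+1 then coeffVec g (d+1-j) else 0,
          fun j => if j ≤ d+1 then coeffVec f (d+1-j) else 0, ?_, ?_, ?_, ?_⟩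
  · simp only [Nat.zero_le, if_true, Nat.sub_zero]
    exact hd _ (by omega)
  · intro j
    beta_reduce
    by_cases hj : j + 1 ≤ d + 1
    · have hj' : j ≤ d + 1 := by omega
      have harith : d + 1 - j = (d + 1 - (j+1)) + 1 := by omega
      simp only [hj, hj', if_true]
      rw [harith, ← hrec (d + 1 - (j+1))]
    · by_cases hj' : j ≤ d + 1
      · have hjd : j = d + 1 := by omega
        rw [if_neg hj, if_pos hj', if_pos hj', hjd, Nat.sub_self]
        exact h0.symm
      · simp [hj, hj', Matrix.mulVec_zero]
  · intro j _ _
    by_cases hj : j ≤ d + 1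
    · simp only [hj, if_true]; exact hU _
    · simp only [hj, if_false]; exact U.zero_mem
  · have h1 : d + 1 - k ≤ d + 1 := by omega
    have h2 : d + 1 - (d + 1 - k) = k := by omega
    simp only [h1, if_true, h2]

/-- Forward extension inside an invariant submodule. -/
lemma forward_ext {A : Matrix (Fin n) (Fin n) R} {B : Matrix (Fin n) (Fin m) R}
    {U : Submodule R (Fin n → R)} (hinv : ABInvariant A B U)
    (x : Fin n → R) (hx : x ∈ U) :
    ∃ (w : ℕ → Fin n → R) (v : ℕ → Fin m → R), w 0 = x ∧ (∀ j, w j ∈ U) ∧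
      ∀ j, w (j+1) = A.mulVec (w j) + B.mulVec (v j) := by
  classical
  have hstep : ∀ y : Fin n → R, ∃ pr : (Fin n → R) × (Fin m → R),
      y ∈ U → (pr.1 ∈ U ∧ pr.1 = A.mulVec y + B.mulVec pr.2) := by
    intro y
    by_cases hy : y ∈ U
    · obtain ⟨p, hp, q, hq, hpq⟩ := Submodule.mem_sup.mp (hinv y hy)
      obtain ⟨v, hv⟩ := hq
      refine ⟨(p, -v), fun _ => ⟨hp, ?_⟩⟩
      rw [Matrix.mulVec_neg]
      have : B.mulVec v = q := by rw [← hv]; rfl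
      rw [this, ← hpq]; ring
    · exact ⟨(0, 0), fun h => absurd h hy⟩
  choose F hF using hstep
  have hmem : ∀ j, (fun y => (F y).1)^[j] x ∈ U := by
    intro j
    induction j with
    | zero => exact hx
    | succ j ih =>
        rw [Function.iterate_succ_apply']
        exact (hF _ ih).1
  refine ⟨fun j => (fun y => (F y).1)^[j] x, fun j => (F ((fun y => (F y).1)^[j] x)).2,
    rfl, hmem, ?_⟩
  intro j
  show (fun y => (F y).1)^[j+1] x = _
  rw [Function.iterate_succ_apply']
  exact (hF _ (hmem j)).2


lemma coeffVec_smul' (c : R[X]) (f : Fin n → R[X]) (k : ℕ) :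
    coeffVec (c • f) k = ∑ ab ∈ Finset.HasAntidiagonal.antidiagonal k, c.coeff ab.1 • coeffVec f ab.2 := by
  funext i
  simp only [coeffVec, Pi.smul_apply, smul_eq_mul, coeff_mul, Finset.sum_apply]

lemma coeffVec_sum {ι : Type*} (s : Finset ι) (f : ι → (Fin n → R[X])) (k : ℕ) :
    coeffVec (∑ i ∈ s, f i) k = ∑ i ∈ s, coeffVec (f i) k := by
  funext j
  simp [coeffVec, Finset.sum_apply, finset_sum_coeff]

theorem stmt_13 [IsNoetherianRing R] (A : Matrix (Fin n) (Fin n) R)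
    (B : Matrix (Fin n) (Fin m) R) (M : Submodule R (Fin n → R))
    (s : ℕ) (h : Fin s → (Fin n → R[X]) × (Fin m → R[X]))
    (hmem : ∀ i, h i ∈ scrM A B M)
    (hgen : ∀ p ∈ scrM A B M, ∃ c : Fin s → R[X], p = ∑ i, c i • h i) :
    Submodule.span R (⋃ i, Set.range (coeffVec (h i).1)) =
      sSup {U : Submodule R (Fin n → R) | ABReachability A B U ∧ U ≤ M} := by
  classical
  set W := Submodule.span R (⋃ i, Set.range (coeffVec (h i).1)) with hWdef
  have hgenW : ∀ (i : Fin s) (k : ℕ), coeffVec (h i).1 k ∈ W := by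
    intro i k
    apply Submodule.subset_span
    exact Set.mem_iUnion.mpr ⟨i, Set.mem_range_self k⟩
  -- every coefficient vector of an element of `scrM` lies in `W`
  have hscrW : ∀ p ∈ scrM A B M, ∀ k : ℕ, coeffVec p.1 k ∈ W := by
    intro p hp k
    obtain ⟨c, hc⟩ := hgen p hp
    have h1 : p.1 = ∑ i, c i • (h i).1 := by
      rw [hc, Prod.fst_sum]
      simp
    rw [h1, coeffVec_sum]
    apply Submodule.sum_mem
    intro i _
    rw [coeffVec_smul']
    apply Submodule.sum_mem
    intro ab _
    exact W.smul_mem _ (hgenW i ab.2)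
  apply le_antisymm
  · -- `W` is itself a reachability submodule contained in `M`
    apply le_sSup
    refine ⟨⟨?_, ?_⟩, ?_⟩
    · -- invariance
      intro x hx
      induction hx using Submodule.span_induction with
      | mem y hy =>
          obtain ⟨S, ⟨i, rfl⟩, hyS⟩ := hy
          obtain ⟨k, rfl⟩ := hyS
          obtain ⟨hk0, hkrec⟩ := (kerCond_iff A B (h i).1 (h i).2).mp (hmem i).1
          cases k with
          | zero =>
              have : A.mulVec (coeffVec (h i).1 0) =
                  B.mulVec (-(coeffVec (h i).2 0)) := by
                rw [Matrix.mulVec_neg]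
                exact eq_neg_of_add_eq_zero_left hk0
              rw [this]
              exact Submodule.mem_sup_right ⟨-(coeffVec (h i).2 0), rfl⟩
          | succ k =>
              have : A.mulVec (coeffVec (h i).1 (k+1)) =
                  coeffVec (h i).1 k + B.mulVec (-(coeffVec (h i).2 (k+1))) := by
                rw [Matrix.mulVec_neg, ← sub_eq_add_neg]
                exact eq_sub_of_add_eq (hkrec k).symm
              rw [this]
              exact Submodule.add_mem _ (Submodule.mem_sup_left (hgenW i k))
                (Submodule.mem_sup_right ⟨-(coeffVec (h i).2 (k+1)), rfl⟩)
      | zero => rw [Matrix.mulVec_zero]; exact Submodule.zero_mem _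
      | add y z _ _ hy hz => rw [Matrix.mulVec_add]; exact Submodule.add_mem _ hy hz
      | smul c y _ hy => rw [Matrix.mulVec_smul]; exact Submodule.smul_mem _ _ hy
    · -- reachability
      intro x hx
      set D := Finset.univ.sup
        (fun i : Fin s => Finset.univ.sup fun j : Fin n => ((h i).1 j).natDegree) with hD
      refine ⟨D + 1, ?_⟩
      have hsub : W ≤ reachedSub A B W (D + 1) := by
        conv_lhs => rw [hWdef]
        apply Submodule.span_le.mpr
        rintro y hy
        obtain ⟨S, ⟨i, rfl⟩, hyS⟩ := hy
        obtain ⟨k, rfl⟩ := hyS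
        have hd : ∀ k', D < k' → coeffVec (h i).1 k' = 0 := by
          intro k' hk'
          funext j
          apply coeff_eq_zero_of_natDegree_lt
          calc ((h i).1 j).natDegree
              ≤ Finset.univ.sup (fun j : Fin n => ((h i).1 j).natDegree) :=
                Finset.le_sup (f := fun j : Fin n => ((h i).1 j).natDegree)
                  (Finset.mem_univ j)
            _ ≤ D := Finset.le_sup
                (f := fun i : Fin s => Finset.univ.sup fun j : Fin n => ((h i).1 j).natDegree)
                (Finset.mem_univ i)
            _ < k' := hk'
        by_cases hk : k ≤ D + 1
        · have base := reached_coeffVec A B (h i).1 (h i).2 (hmem i).1 W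
            (hgenW i) D hd k hk
          have hpad := ABReached.pad base k
          rwa [show D + 1 - k + k = D + 1 by omega] at hpad
        · have hzero : coeffVec (h i).1 k = 0 := hd k (by omega)
          rw [hzero]
          exact Submodule.zero_mem (reachedSub A B W (D + 1))
      exact hsub hx
    · -- W ≤ M
      apply Submodule.span_le.mpr
      rintro y hy
      obtain ⟨S, ⟨i, rfl⟩, hyS⟩ := hy
      obtain ⟨k, rfl⟩ := hyS
      exact (hmem i).2 k
  · -- every reachability submodule contained in `M` is contained in `W`
    apply sSup_le
    rintro U ⟨⟨hinv, hreach⟩, hUM⟩ x hx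
    obtain ⟨N0, hN0⟩ := monotone_stabilizes_iff_noetherian.mpr inferInstance
      ⟨reachedSub A B U, reachedSub_mono A B U⟩
    set N := N0 + 1 with hNdef
    have hUall : ∀ y ∈ U, ABReached A B U y N := by
      intro y hy
      obtain ⟨r, hr⟩ := hreach y hy
      have h1 : ABReached A B U y (max r N) := by
        have := ABReached.pad hr (max r N - r)
        rwa [show r + (max r N - r) = max r N by omega] at this
      have h2 : reachedSub A B U (max r N) = reachedSub A B U N := by
        have e1 := hN0 (max r N) (by omega)
        have e2 := hN0 N (by omega)
        exact e1.symm.trans e2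
      show y ∈ reachedSub A B U N
      rw [← h2]
      exact h1
    obtain ⟨u, xs, hxs0, hxsrec, hxsmem, hxsr⟩ := hUall x hx
    obtain ⟨w, v, hw0, hwmem, hwrec⟩ := forward_ext hinv x hx
    obtain ⟨uy, ys, hys0, hysrec, hysmem, hysr⟩ := hUall (w N) (hwmem N)
    have hN1 : 1 ≤ N := by omega
    -- combined trajectory X through x and on to w N, minus padded trajectory Y to w N
    set z : ℕ → Fin n → R := fun j =>
      (if j ≤ N then xs j else w (j - N)) - (if j < N then 0 else ys (j - N)) with hzdef
    set wz : ℕ → Fin m → R := fun j =>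
      (if j < N then u j else v (j - N)) - (if j < N then 0 else uy (j - N)) with hwzdef
    have hz0 : z 0 = 0 := by
      simp only [hzdef, Nat.zero_le, if_true, if_pos (show 0 < N by omega), hxs0, sub_zero]
    have hzrec : ∀ j, z (j+1) = A.mulVec (z j) + B.mulVec (wz j) := by
      intro j
      have hXrec : (if j + 1 ≤ N then xs (j+1) else w (j + 1 - N)) =
          A.mulVec (if j ≤ N then xs j else w (j - N)) +
            B.mulVec (if j < N then u j else v (j - N)) := by
        by_cases hj : j + 1 ≤ N
        · rw [if_pos hj, if_pos (show j ≤ N by omega), if_pos (show j < N by omega)]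
          exact hxsrec j
        · by_cases hj' : j ≤ N
          · have hjN : j = N := by omega
            rw [if_neg hj, if_pos hj', if_neg (show ¬ j < N by omega), hjN,
              Nat.add_sub_cancel_left, Nat.sub_self, hxsr, ← hw0]
            exact hwrec 0
          · rw [if_neg hj, if_neg hj', if_neg (show ¬ j < N by omega),
              show j + 1 - N = (j - N) + 1 by omega]
            exact hwrec (j - N)
      have hYrec : (if j + 1 < N then 0 else ys (j + 1 - N)) =
          A.mulVec (if j < N then 0 else ys (j - N)) +
            B.mulVec (if j < N then 0 else uy (j - N)) := by
        by_cases hj : j < N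
        · by_cases hj' : j + 1 < N
          · simp [hj, hj', Matrix.mulVec_zero]
          · simp [hj, hj', show j + 1 - N = 0 by omega, hys0, Matrix.mulVec_zero]
        · have hj2 : ¬ j + 1 < N := by omega
          have e : j + 1 - N = (j - N) + 1 := by omega
          rw [if_neg hj, if_neg hj, if_neg hj2, e]
          exact hysrec (j - N)
      simp only [hzdef, hwzdef, hXrec, hYrec, Matrix.mulVec_sub]
      abel
    have hzT : z (N + N - 1 + 1) = 0 := by
      have e : N + N - 1 + 1 = N + N := by omega
      simp only [hzdef, e, if_neg (show ¬ N + N ≤ N by omega),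
        if_neg (show ¬ N + N < N by omega), show N + N - N = N by omega, hysr, sub_self]
    have hzM : ∀ j, j ≤ N + N - 1 → z j ∈ M := by
      intro j hj
      apply hUM
      have hXU : (if j ≤ N then xs j else w (j - N)) ∈ U := by
        by_cases hj' : j ≤ N
        · rw [if_pos hj']
          rcases Nat.eq_zero_or_pos j with h0 | h0
          · rw [h0, hxs0]; exact U.zero_mem
          · exact hxsmem j h0 hj'
        · rw [if_neg hj']; exact hwmem _
      have hYU : (if j < N then 0 else ys (j - N)) ∈ U := by
        by_cases hj' : j < N
        · rw [if_pos hj']; exact U.zero_mem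
        · rw [if_neg hj']
          rcases Nat.eq_zero_or_pos (j - N) with h0 | h0
          · rw [h0, hys0]; exact U.zero_mem
          · exact hysmem _ h0 (by omega)
      exact U.sub_mem hXU hYU
    have hp := mem_scrM_of_loop A B M z wz (N + N - 1) hz0 hzrec hzT hzM
    have hx' := hscrW _ hp (N + N - 1 - N)
    rw [coeffVec_polyOf] at hx'
    rw [if_pos (show N + N - 1 - N ≤ N + N - 1 by omega),
      show N + N - 1 - (N + N - 1 - N) = N by omega] at hx'
    have hzN : z N = x := by
      simp only [hzdef, if_pos (le_refl N), if_neg (lt_irrefl N), Nat.sub_self, hys0,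
        sub_zero, hxsr]
    rwa [hzN] at hx'
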